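/- Let Δ₃ be the 3×3 Laplacian matrix with rows (−2, 1, 1), (1, −1, 0), (1, 0, −1), and define L(f) = ‖Δ₃ f‖_∞ on ℝ³. Then L satisfies the Leibniz inequality L(fg) ≤ ‖f‖_∞ L(g) + ‖g‖_∞ L(f) for all f, g ∈ ℝ³ (with fg the pointwise product), but L is not strongly Leibniz: for f = (−0.1, 0.1, −0.2), the inequality L(1/f) ≤ ‖1/f‖_∞² L(f) fails, where 1/f denotes the coordinatewise inverse. -/

import Mathlib

open Finset

/-- The symmetric matrix `Θ_x`: off-diagonal entries `(xᵢ+xⱼ)/(2n)`, diagonal chosen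
so that every row sums to zero. -/
noncomputable def Theta (n : ℕ) (x : Fin n → ℝ) : Matrix (Fin n) (Fin n) ℝ :=
  fun i j =>
    if i = j then -(∑ k ∈ Finset.univ.erase i, (x i + x k) / (2 * n))
    else (x i + x j) / (2 * n)

/-- `I_x = Iₙ + Θ_x`. -/
noncomputable def Imat (n : ℕ) (x : Fin n → ℝ) : Matrix (Fin n) (Fin n) ℝ :=
  1 + Theta n x

/-- `E f`: the constant vector whose entries all equal the mean of `f`. -/
noncomputable def meanVec (n : ℕ) (f : Fin n → ℝ) : Fin n → ℝ :=
  fun _ => (∑ i, f i) / n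

/-- The sup norm `‖x‖_∞`. -/
noncomputable def linf (n : ℕ) (x : Fin n → ℝ) : ℝ :=
  sSup (Set.range fun i => |x i|)

/-- The Ky Fan `k`-norm: the sum of the `k` largest absolute values of the entries,
i.e. the maximum of `∑_{i ∈ S} |xᵢ|` over subsets `S` of cardinality `k`. -/
noncomputable def kyFan (n k : ℕ) (x : Fin n → ℝ) : ℝ :=
  sSup ((fun S : Finset (Fin n) => ∑ i ∈ S, |x i|) '' {S | S.card = k})

/-- The dual Ky Fan `k`-norm: `max(‖x‖_∞, ‖x‖₁ / k)`. -/
noncomputable def kyFanDual (n k : ℕ) (x : Fin n → ℝ) : ℝ :=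
  max (linf n x) ((∑ i, |x i|) / k)

/-- A symmetric norm on `ℝⁿ`: a norm invariant under coordinate permutations
and sign changes. -/
structure IsSymmNorm (n : ℕ) (N : (Fin n → ℝ) → ℝ) : Prop where
  add_le : ∀ x y, N (x + y) ≤ N x + N y
  smul : ∀ (c : ℝ) (x), N (c • x) = |c| * N x
  pos : ∀ x, x ≠ 0 → 0 < N x
  perm : ∀ (σ : Equiv.Perm (Fin n)) (x), N (x ∘ σ) = N x
  sign : ∀ (ε x : Fin n → ℝ), (∀ i, ε i = 1 ∨ ε i = -1) → N (ε * x) = N x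

/-- The Laplacian `Δ₃` of Section 4. -/
def Delta3 : Matrix (Fin 3) (Fin 3) ℝ :=
  !![-2, 1, 1; 1, -1, 0; 1, 0, -1]

/-- The seminorm `L(f) = ‖Δ₃ f‖_∞` on `ℝ³`. -/
noncomputable def L3 (f : Fin 3 → ℝ) : ℝ :=
  linf 3 (Delta3.mulVec f)

/-- Section 4: `L(f) = ‖Δ₃ f‖_∞` is a Leibniz seminorm on `ℝ³` which is not
strongly Leibniz: the strong Leibniz inequality `L(1/f) ≤ ‖1/f‖_∞² L(f)` fails
for `f = (−0.1, 0.1, −0.2)` (with `1/f` the coordinatewise inverse). -/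
lemma linf_le (n : ℕ) [NeZero n] (x : Fin n → ℝ) (c : ℝ) (h : ∀ i, |x i| ≤ c) :
    linf n x ≤ c :=
  csSup_le (Set.range_nonempty _) (by rintro r ⟨i, rfl⟩; exact h i)

lemma le_linf (n : ℕ) (x : Fin n → ℝ) (i : Fin n) : |x i| ≤ linf n x :=
  le_csSup (Set.finite_range _).bddAbove ⟨i, rfl⟩

lemma linf3_eq (x : Fin 3 → ℝ) : linf 3 x = |x 0| ⊔ (|x 1| ⊔ |x 2|) := by
  unfold linf
  apply le_antisymm
  · apply csSup_le (Set.range_nonempty _)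
    rintro r ⟨i, rfl⟩
    fin_cases i <;> simp [le_sup_left, le_sup_right]
  · exact sup_le (le_linf 3 x 0) (sup_le (le_linf 3 x 1) (le_linf 3 x 2))

lemma mulVec3 (x : Fin 3 → ℝ) :
    Delta3.mulVec x = ![-(2*x 0 - x 1 - x 2), x 0 - x 1, x 0 - x 2] := by
  funext i
  fin_cases i <;>
    simp [Delta3, Matrix.mulVec, dotProduct, Fin.sum_univ_three, Matrix.vecHead, Matrix.vecTail] <;> ring

lemma mb (x y A : ℝ) (h : |x| ≤ A) : x*y ≤ A * |y| := by
  calc x*y ≤ |x * y| := le_abs_self _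
    _ = |x| * |y| := abs_mul _ _
    _ ≤ A * |y| := mul_le_mul_of_nonneg_right h (abs_nonneg _)

lemma add_abs_le (a b : ℝ) (h : 0 ≤ a*b) : |a| + |b| ≤ |a+b| := by
  have h2 : (|a| + |b|)^2 ≤ |a+b|^2 := by
    rw [sq_abs]
    nlinarith [sq_abs a, sq_abs b, abs_nonneg a, abs_nonneg b]
  exact le_of_pow_le_pow_left₀ two_ne_zero (abs_nonneg _) h2

lemma opp_le (u v : ℝ) (h : u*v ≤ 0) : |u+v| ≤ max |u| |v| - min |u| |v| := by
  have key : |u+v| ≤ |(|u| - |v|)| := by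
    have h2 : |u+v|^2 ≤ |(|u| - |v|)|^2 := by
      rw [sq_abs, sq_abs]
      nlinarith [sq_abs u, sq_abs v, abs_nonneg u, abs_nonneg v,
        abs_mul u v, abs_of_nonpos h, neg_abs_le (u*v)]
    exact le_of_pow_le_pow_left₀ two_ne_zero (abs_nonneg _) h2
  calc |u+v| ≤ |(|u| - |v|)| := key
    _ = max |u| |v| - min |u| |v| := by
        rw [abs_sub_comm]; exact (max_sub_min_eq_abs |u| |v|).symm

lemma core1 (f0 f1 f2 g0 g1 g2 F G Lf Lg : ℝ)
    (hf0 : |f0| ≤ F) (hf1 : |f1| ≤ F) (hf2 : |f2| ≤ F)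
    (hg0 : |g0| ≤ G) (hg1 : |g1| ≤ G) (hg2 : |g2| ≤ G)
    (hu : |f0 - f1| ≤ Lf) (hv : |f0 - f2| ≤ Lf) (huv : |2*f0 - f1 - f2| ≤ Lf)
    (hp : |g0 - g1| ≤ Lg) (hq : |g0 - g2| ≤ Lg) (hpq : |2*g0 - g1 - g2| ≤ Lg) :
    2*f0*g0 - f1*g1 - f2*g2 ≤ F*Lg + G*Lf := by
  have hF : 0 ≤ F := (abs_nonneg _).trans hf0
  have hG : 0 ≤ G := (abs_nonneg _).trans hg0
  set u := f0 - f1 with hu'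
  set v := f0 - f2 with hv'
  set p := g0 - g1 with hp'
  set q := g0 - g2 with hq'
  have eA : 2*f0*g0 - f1*g1 - f2*g2 = f0*(p+q) + g1*u + g2*v := by
    rw [hu', hv', hp', hq']; ring
  have eB : 2*f0*g0 - f1*g1 - f2*g2 = g0*(u+v) + f1*p + f2*q := by
    rw [hu', hv', hp', hq']; ring
  have epq : p + q = 2*g0 - g1 - g2 := by rw [hp', hq']; ring
  have euv : u + v = 2*f0 - f1 - f2 := by rw [hu', hv']; ring
  have hApq : |p + q| ≤ Lg := by rw [epq]; exact hpq
  have hAuv : |u + v| ≤ Lf := by rw [euv]; exact huv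
  rcases le_or_gt 0 (u*v) with huv2 | huv2
  · -- u, v same sign
    rw [eA]
    have t1 : f0*(p+q) ≤ F * |p+q| := mb _ _ _ hf0
    have t2 : g1*u ≤ G * |u| := mb _ _ _ hg1
    have t3 : g2*v ≤ G * |v| := mb _ _ _ hg2
    have t4 : |u| + |v| ≤ |u+v| := add_abs_le _ _ huv2
    linarith [mul_le_mul_of_nonneg_left hApq hF, mul_le_mul_of_nonneg_left hAuv hG,
      mul_le_mul_of_nonneg_left t4 hG]
  rcases le_or_gt 0 (p*q) with hpq2 | hpq2
  · rw [eB]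
    have t1 : g0*(u+v) ≤ G * |u+v| := mb _ _ _ hg0
    have t2 : f1*p ≤ F * |p| := mb _ _ _ hf1
    have t3 : f2*q ≤ F * |q| := mb _ _ _ hf2
    have t4 : |p| + |q| ≤ |p+q| := add_abs_le _ _ hpq2
    linarith [mul_le_mul_of_nonneg_left hApq hF, mul_le_mul_of_nonneg_left hAuv hG,
      mul_le_mul_of_nonneg_left t4 hF]
  · -- both opposite signs
    have omf : max |u| |v| ≤ Lf := max_le hu hv
    have omg : max |p| |q| ≤ Lg := max_le hp hq
    have mfg : max |p| |q| + min |p| |q| = |p| + |q| := max_add_min _ _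
    have mff : max |u| |v| + min |u| |v| = |u| + |v| := max_add_min _ _
    rcases le_total (F * min |p| |q|) (G * min |u| |v|) with h5 | h5
    · rw [eB]
      have t1 : g0*(u+v) ≤ G * |u+v| := mb _ _ _ hg0
      have t2 : f1*p ≤ F * |p| := mb _ _ _ hf1
      have t3 : f2*q ≤ F * |q| := mb _ _ _ hf2
      have t4 : |u+v| ≤ max |u| |v| - min |u| |v| := opp_le _ _ huv2.le
      have e6 : F * max |p| |q| + F * min |p| |q| = F * |p| + F * |q| := by
        rw [← mul_add, mfg]; ring
      linarith [mul_le_mul_of_nonneg_left t4 hG, mul_le_mul_of_nonneg_left omf hG,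
        mul_le_mul_of_nonneg_left omg hF]
    · rw [eA]
      have t1 : f0*(p+q) ≤ F * |p+q| := mb _ _ _ hf0
      have t2 : g1*u ≤ G * |u| := mb _ _ _ hg1
      have t3 : g2*v ≤ G * |v| := mb _ _ _ hg2
      have t4 : |p+q| ≤ max |p| |q| - min |p| |q| := opp_le _ _ hpq2.le
      have e6 : G * max |u| |v| + G * min |u| |v| = G * |u| + G * |v| := by
        rw [← mul_add, mff]; ring
      linarith [mul_le_mul_of_nonneg_left t4 hF, mul_le_mul_of_nonneg_left omg hF,
        mul_le_mul_of_nonneg_left omf hG]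

lemma row_abs (f0 f1 g0 g1 F G Lf Lg : ℝ)
    (hf0 : |f0| ≤ F) (hg1 : |g1| ≤ G)
    (hu : |f0 - f1| ≤ Lf) (hp : |g0 - g1| ≤ Lg) :
    |f0*g0 - f1*g1| ≤ F*Lg + G*Lf := by
  have h : f0*g0 - f1*g1 = f0*(g0-g1) + g1*(f0-f1) := by ring
  rw [h]
  calc |f0*(g0-g1) + g1*(f0-f1)| ≤ |f0 * (g0-g1)| + |g1 * (f0-f1)| := abs_add_le _ _
    _ = |f0| * |g0-g1| + |g1| * |f0-f1| := by rw [abs_mul, abs_mul]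
    _ ≤ F*Lg + G*Lf := by
        gcongr
        · exact (abs_nonneg _).trans hf0
        · exact (abs_nonneg _).trans hg1

lemma core2 (f0 f1 f2 g0 g1 g2 F G Lf Lg : ℝ)
    (hf0 : |f0| ≤ F) (hf1 : |f1| ≤ F) (hf2 : |f2| ≤ F)
    (hg0 : |g0| ≤ G) (hg1 : |g1| ≤ G) (hg2 : |g2| ≤ G)
    (hu : |f0 - f1| ≤ Lf) (hv : |f0 - f2| ≤ Lf) (huv : |2*f0 - f1 - f2| ≤ Lf)
    (hp : |g0 - g1| ≤ Lg) (hq : |g0 - g2| ≤ Lg) (hpq : |2*g0 - g1 - g2| ≤ Lg) :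
    |2*f0*g0 - f1*g1 - f2*g2| ≤ F*Lg + G*Lf := by
  rw [abs_le]
  constructor
  · have h2 := core1 f0 f1 f2 (-g0) (-g1) (-g2) F G Lf Lg hf0 hf1 hf2
      (by rwa [abs_neg]) (by rwa [abs_neg]) (by rwa [abs_neg])
      hu hv huv
      (by rw [show -g0 - -g1 = -(g0 - g1) by ring, abs_neg]; exact hp)
      (by rw [show -g0 - -g2 = -(g0 - g2) by ring, abs_neg]; exact hq)
      (by rw [show 2*(-g0) - -g1 - -g2 = -(2*g0 - g1 - g2) by ring, abs_neg]; exact hpq)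
    nlinarith [h2]
  · exact core1 f0 f1 f2 g0 g1 g2 F G Lf Lg hf0 hf1 hf2 hg0 hg1 hg2 hu hv huv hp hq hpq

lemma entry0 (x : Fin 3 → ℝ) : Delta3.mulVec x 0 = -(2*x 0 - x 1 - x 2) := by
  rw [mulVec3]; rfl
lemma entry1 (x : Fin 3 → ℝ) : Delta3.mulVec x 1 = x 0 - x 1 := by
  rw [mulVec3]; rfl
lemma entry2 (x : Fin 3 → ℝ) : Delta3.mulVec x 2 = x 0 - x 2 := by
  rw [mulVec3]; rfl

lemma bd1 (f : Fin 3 → ℝ) : |f 0 - f 1| ≤ L3 f := by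
  have h := le_linf 3 (Delta3.mulVec f) 1
  rwa [entry1] at h
lemma bd2 (f : Fin 3 → ℝ) : |f 0 - f 2| ≤ L3 f := by
  have h := le_linf 3 (Delta3.mulVec f) 2
  rwa [entry2] at h
lemma bd0 (f : Fin 3 → ℝ) : |2*f 0 - f 1 - f 2| ≤ L3 f := by
  have h := le_linf 3 (Delta3.mulVec f) 0
  rwa [entry0, abs_neg] at h


theorem stmt_19 :
    (∀ f g : Fin 3 → ℝ, L3 (f * g) ≤ linf 3 f * L3 g + linf 3 g * L3 f) ∧
      ¬ L3 (![(-0.1 : ℝ), 0.1, -0.2])⁻¹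
          ≤ (linf 3 (![(-0.1 : ℝ), 0.1, -0.2])⁻¹) ^ 2 * L3 ![(-0.1 : ℝ), 0.1, -0.2] := by
  constructor
  · intro f g
    have hf : ∀ i, |f i| ≤ linf 3 f := le_linf 3 f
    have hg : ∀ i, |g i| ≤ linf 3 g := le_linf 3 g
    apply linf_le
    intro i
    fin_cases i
    · show |Delta3.mulVec (f * g) 0| ≤ _
      rw [entry0, abs_neg]
      have h0 := core2 (f 0) (f 1) (f 2) (g 0) (g 1) (g 2) (linf 3 f) (linf 3 g)
        (L3 f) (L3 g) (hf 0) (hf 1) (hf 2) (hg 0) (hg 1) (hg 2)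
        (bd1 f) (bd2 f) (bd0 f) (bd1 g) (bd2 g) (bd0 g)
      have e : 2*(f*g) 0 - (f*g) 1 - (f*g) 2 = 2*f 0*g 0 - f 1*g 1 - f 2*g 2 := by
        simp [Pi.mul_apply]; ring
      rw [e]
      exact h0
    · show |Delta3.mulVec (f * g) 1| ≤ _
      rw [entry1]
      have h1 := row_abs (f 0) (f 1) (g 0) (g 1) (linf 3 f) (linf 3 g) (L3 f) (L3 g)
        (hf 0) (hg 1) (bd1 f) (bd1 g)
      have e : (f*g) 0 - (f*g) 1 = f 0*g 0 - f 1*g 1 := by simp [Pi.mul_apply]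
      rw [e]
      exact h1
    · show |Delta3.mulVec (f * g) 2| ≤ _
      rw [entry2]
      have h2 := row_abs (f 0) (f 2) (g 0) (g 2) (linf 3 f) (linf 3 g) (L3 f) (L3 g)
        (hf 0) (hg 2) (bd2 f) (bd2 g)
      have e : (f*g) 0 - (f*g) 2 = f 0*g 0 - f 2*g 2 := by simp [Pi.mul_apply]
      rw [e]
      exact h2
  · have e1 : (![(-0.1 : ℝ), 0.1, -0.2])⁻¹ = ![(-10 : ℝ), 10, -5] := by
      funext i; fin_cases i <;> norm_num [Pi.inv_apply]
    rw [e1]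
    rw [show L3 ![(-10 : ℝ), 10, -5] = 25 by
      rw [L3, mulVec3, linf3_eq]; norm_num [abs, max_def, Matrix.cons_val_two, Matrix.vecHead, Matrix.vecTail]]
    rw [show linf 3 ![(-10 : ℝ), 10, -5] = 10 by
      rw [linf3_eq]; norm_num [abs, max_def, Matrix.cons_val_two, Matrix.vecHead, Matrix.vecTail]]
    rw [show L3 ![(-0.1 : ℝ), 0.1, -0.2] = 0.2 by
      rw [L3, mulVec3, linf3_eq]; norm_num [abs, max_def, Matrix.cons_val_two, Matrix.vecHead, Matrix.vecTail]]
    norm_num
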